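/- arXiv:1710.07003 — 2 statements merged into one kernel-verified Lean document; each statement's English description precedes it below -/
import Mathlib

section
/- Fractional Bellman–Gronwall lemma: let ε ≥ 0, λ ≥ 0, α ∈ (0,1), and let x ∈ C([0,T], ℝ) satisfy |x(t)| ≤ ε + (λ/Γ(α)) ∫₀^t |x(τ)|/(t−τ)^{1−α} dτ for all t ∈ [0,T]. Then |x(t)| ≤ ε E_α(λ t^α) ≤ ε E_α(λ T^α) for all t ∈ [0,T], where E_α is the Mittag-Leffler function. -/
open MeasureTheory Real Set Filter Topology
open scoped ENNReal NNReal

noncomputable def RLint (α : ℝ) {E : Type*} [NormedAddCommGroup E] [NormedSpace ℝ E]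
    (φ : ℝ → E) (t : ℝ) : E :=
  (Real.Gamma α)⁻¹ • ∫ τ in (0:ℝ)..t, ((t - τ) ^ (α - 1)) • φ τ

noncomputable def RLderiv (α : ℝ) {E : Type*} [NormedAddCommGroup E] [NormedSpace ℝ E]
    (x : ℝ → E) (t : ℝ) : E :=
  deriv (fun s => (Real.Gamma (1 - α))⁻¹ • ∫ τ in (0:ℝ)..s, ((s - τ) ^ (-α)) • x τ) t

noncomputable def CaputoD (α : ℝ) {E : Type*} [NormedAddCommGroup E] [NormedSpace ℝ E]
    (x : ℝ → E) (t : ℝ) : E :=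
  RLderiv α (fun s => x s - x 0) t

noncomputable def mittagLeffler (α z : ℝ) : ℝ := ∑' k : ℕ, z ^ k / Real.Gamma (α * k + 1)


lemma gamma_add_lb {x α : ℝ} (hx : 1 ≤ x) (hα : α ∈ Set.Ioo (0:ℝ) 1) :
    Real.Gamma x * (x ^ α / 2) ≤ Real.Gamma (x + α) := by
  obtain ⟨hα0, hα1⟩ := hα
  have hx0 : (0:ℝ) < x := by linarith
  have hxα : (0:ℝ) < x + α := by linarith
  have key := Real.Gamma_mul_add_mul_le_rpow_Gamma_mul_rpow_Gamma
    (s := x + α) (t := x + α + 1) (a := α) (b := 1 - α) hxα (by linarith) hα0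
    (by linarith) (by ring)
  have e1 : α * (x + α) + (1 - α) * (x + α + 1) = x + 1 := by ring
  rw [e1] at key
  have e2 : Real.Gamma (x + α + 1) = (x + α) * Real.Gamma (x + α) :=
    Real.Gamma_add_one hxα.ne'
  rw [e2] at key
  have hG : 0 < Real.Gamma (x + α) := Real.Gamma_pos_of_pos hxα
  have key2 : x * Real.Gamma x ≤ Real.Gamma (x + α) * (x + α) ^ (1 - α) := by
    have : Real.Gamma (x + 1) = x * Real.Gamma x := Real.Gamma_add_one hx0.ne'
    rw [this] at key
    calc x * Real.Gamma x ≤ Real.Gamma (x + α) ^ α * ((x + α) * Real.Gamma (x + α)) ^ (1 - α) :=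
          key
      _ = Real.Gamma (x + α) * (x + α) ^ (1 - α) := by
          rw [Real.mul_rpow hxα.le hG.le,
            mul_comm ((x + α) ^ (1 - α)) (Real.Gamma (x + α) ^ (1 - α)), ← mul_assoc,
            ← Real.rpow_add hG]
          norm_num
  -- (x+α)^(1-α) ≤ (2x)^(1-α) ≤ 2 * x^(1-α)
  have h2x : (x + α) ^ (1 - α) ≤ 2 * x ^ (1 - α) := by
    calc (x + α) ^ (1 - α) ≤ (2 * x) ^ (1 - α) := by
          apply Real.rpow_le_rpow hxα.le (by linarith) (by linarith)
      _ = 2 ^ (1 - α) * x ^ (1 - α) := Real.mul_rpow (by norm_num) hx0.le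
      _ ≤ 2 * x ^ (1 - α) := by
          have : (2:ℝ) ^ (1 - α) ≤ 2 ^ (1:ℝ) :=
            Real.rpow_le_rpow_of_exponent_le (by norm_num) (by linarith)
          simp only [Real.rpow_one] at this
          have := Real.rpow_nonneg hx0.le (1 - α)
          nlinarith
  have hxpow : x = x ^ α * x ^ (1 - α) := by
    rw [← Real.rpow_add hx0]; norm_num
  have hxa : 0 < x ^ α := Real.rpow_pos_of_pos hx0 α
  have hx1a : 0 < x ^ (1 - α) := Real.rpow_pos_of_pos hx0 (1 - α)
  have hGx : 0 < Real.Gamma x := Real.Gamma_pos_of_pos hx0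
  nlinarith [mul_le_mul_of_nonneg_left h2x hG.le]


lemma ml_summable {α : ℝ} (hα : α ∈ Set.Ioo (0:ℝ) 1) {z : ℝ} (hz : 0 ≤ z) :
    Summable (fun k : ℕ => z ^ k / Real.Gamma (α * k + 1)) := by
  obtain ⟨hα0, hα1⟩ := hα
  apply summable_of_ratio_norm_eventually_le (r := 1/2) (by norm_num)
  -- eventually (α*n+1)^α ≥ 4*z
  have htop : Tendsto (fun n : ℕ => (α * n + 1) ^ α) atTop atTop := by
    exact (tendsto_rpow_atTop hα0).comp (tendsto_atTop_add_const_right _ _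
      ((tendsto_natCast_atTop_atTop (R := ℝ)).const_mul_atTop hα0))
  filter_upwards [htop.eventually_ge_atTop (4 * z)] with n hn
  set x : ℝ := α * n + 1 with hxdef
  have hx1 : 1 ≤ x := by
    have : (0:ℝ) ≤ α * n := by positivity
    linarith
  have hx0 : (0:ℝ) < x := by linarith
  have hGx : 0 < Real.Gamma x := Real.Gamma_pos_of_pos hx0
  have hGxα : 0 < Real.Gamma (x + α) := Real.Gamma_pos_of_pos (by linarith)
  have hkey := gamma_add_lb hx1 ⟨hα0, hα1⟩
  have he : α * (n + 1 : ℕ) + 1 = x + α := by push_cast; ring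
  rw [Real.norm_eq_abs, Real.norm_eq_abs, abs_of_nonneg (by positivity),
    abs_of_nonneg (by positivity), he]
  have hzn : (0:ℝ) ≤ z ^ n := by positivity
  have hden : 0 < Real.Gamma x * (x ^ α / 2) := by positivity
  calc z ^ (n+1) / Real.Gamma (x + α) ≤ z ^ (n+1) / (Real.Gamma x * (x ^ α / 2)) := by
        apply div_le_div_of_nonneg_left (by positivity) hden hkey
    _ ≤ 1/2 * (z ^ n / Real.Gamma x) := by
        rw [div_le_iff₀ hden]
        have he2 : 1/2 * (z ^ n / Real.Gamma x) * (Real.Gamma x * (x ^ α / 2))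
            = z ^ n * (x ^ α / 4) := by field_simp; ring
        rw [he2, pow_succ]
        apply mul_le_mul_of_nonneg_left _ hzn
        linarith


lemma beta_real {a b : ℝ} (ha : 0 < a) (hb : 0 < b) {t : ℝ} (ht : 0 < t) :
    ∫ τ in (0:ℝ)..t, τ ^ (a-1) * (t - τ) ^ (b-1) =
      Real.Gamma a * Real.Gamma b / Real.Gamma (a+b) * t ^ (a+b-1) := by
  have key := Complex.betaIntegral_scaled (a := t) (a) (b) ht
  have hne : ((Real.Gamma (a+b) : ℝ) : ℂ) ≠ 0 := by
    exact_mod_cast (Real.Gamma_pos_of_pos (by linarith : (0:ℝ) < a + b)).ne'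
  have hbeta : Complex.betaIntegral a b =
      (Real.Gamma a : ℂ) * Real.Gamma b / Real.Gamma (a+b) := by
    have hG := Complex.Gamma_mul_Gamma_eq_betaIntegral
      (s := (a:ℂ)) (t := (b:ℂ)) (by simpa using ha) (by simpa using hb)
    rw [eq_div_iff hne]
    calc Complex.betaIntegral a b * (Real.Gamma (a+b) : ℂ)
        = Complex.Gamma ((a:ℂ) + b) * Complex.betaIntegral a b := by
          rw [← Complex.Gamma_ofReal]; push_cast; ring
      _ = Complex.Gamma a * Complex.Gamma b := hG.symm
      _ = (Real.Gamma a : ℂ) * Real.Gamma b := by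
          rw [Complex.Gamma_ofReal, Complex.Gamma_ofReal]
  have hlhs : (∫ x in (0:ℝ)..t, (x:ℂ) ^ ((a:ℂ) - 1) * ((t:ℂ) - x) ^ ((b:ℂ) - 1)) =
      ((∫ τ in (0:ℝ)..t, τ ^ (a-1) * (t - τ) ^ (b-1) : ℝ) : ℂ) := by
    rw [← intervalIntegral.integral_ofReal]
    apply intervalIntegral.integral_congr
    intro x hx
    rw [Set.uIcc_of_le ht.le] at hx
    push_cast
    rw [Complex.ofReal_cpow hx.1 (a-1),
      Complex.ofReal_cpow (by linarith [hx.2] : (0:ℝ) ≤ t - x) (b-1)]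
    push_cast
    ring
  have hrhs : (t:ℂ) ^ ((a:ℂ) + b - 1) = ((t ^ (a+b-1) : ℝ) : ℂ) := by
    rw [Complex.ofReal_cpow ht.le]
    push_cast
    ring_nf
  rw [hlhs, hbeta, hrhs] at key
  have keyR : (∫ τ in (0:ℝ)..t, τ ^ (a-1) * (t - τ) ^ (b-1))
      = t ^ (a+b-1) * (Real.Gamma a * Real.Gamma b / Real.Gamma (a+b)) := by
    exact_mod_cast key
  rw [keyR]; ring


lemma cont_rpow_nat {α : ℝ} (hα0 : 0 < α) (k : ℕ) :
    Continuous fun τ : ℝ => τ ^ (α * k) := by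
  cases k with
  | zero => simp only [Nat.cast_zero, mul_zero, Real.rpow_zero]; exact continuous_const
  | succ m =>
    apply continuous_iff_continuousAt.2
    intro x
    exact Real.continuousAt_rpow_const x _ (Or.inr (by positivity))

lemma kernel_integrable {α : ℝ} (hα : α ∈ Set.Ioo (0:ℝ) 1) {t : ℝ} {g : ℝ → ℝ}
    (hg : ContinuousOn g (Set.uIcc 0 t)) :
    IntervalIntegrable (fun τ => (t - τ) ^ (α-1) * g τ) volume 0 t := by
  apply IntervalIntegrable.mul_continuousOn _ hg
  simpa using (intervalIntegral.intervalIntegrable_rpow'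
    (by linarith [hα.1] : (-1:ℝ) < α - 1) (a := 0) (b := t)).comp_sub_left t |>.symm

lemma moment {α : ℝ} (hα : α ∈ Set.Ioo (0:ℝ) 1) (k : ℕ) {t : ℝ} (ht : 0 ≤ t) :
    ∫ τ in (0:ℝ)..t, (t - τ) ^ (α-1) * τ ^ (α * k) =
      Real.Gamma α * Real.Gamma (α * k + 1) / Real.Gamma (α * (k+1) + 1)
        * t ^ (α * (k+1)) := by
  obtain ⟨hα0, hα1⟩ := hα
  rcases eq_or_lt_of_le ht with rfl | ht'
  · rw [intervalIntegral.integral_same, Real.zero_rpow (by positivity : α * ((k:ℝ)+1) ≠ 0)]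
    push_cast
    ring
  · have key := beta_real (a := α * k + 1) (b := α) (by positivity) hα0 ht'
    have e1 : α * (k:ℝ) + 1 - 1 = α * k := by ring
    have e2 : α * (k:ℝ) + 1 + α - 1 = α * ((k:ℝ) + 1) := by ring
    rw [e1, e2] at key
    have e3 : Real.Gamma (α * (k:ℝ) + 1 + α) = Real.Gamma (α * ((k:ℝ)+1) + 1) := by
      ring_nf
    rw [e3] at key
    push_cast
    calc ∫ τ in (0:ℝ)..t, (t - τ) ^ (α-1) * τ ^ (α * (k:ℝ))
        = ∫ τ in (0:ℝ)..t, τ ^ (α * (k:ℝ)) * (t - τ) ^ (α-1) :=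
          intervalIntegral.integral_congr fun τ _ => by ring
      _ = Real.Gamma (α * k + 1) * Real.Gamma α / Real.Gamma (α * ((k:ℝ)+1) + 1)
            * t ^ (α * ((k:ℝ)+1)) := key
      _ = _ := by ring


lemma pow_eq' {α lam t : ℝ} (ht : 0 ≤ t) (k : ℕ) :
    (lam * t ^ α) ^ k = lam ^ k * t ^ (α * k) := by
  rw [mul_pow, ← Real.rpow_natCast (t ^ α) k, ← Real.rpow_mul ht]

lemma gronwall_aux
    (T : ℝ) {α : ℝ} (hα : α ∈ Set.Ioo (0:ℝ) 1)
    (ε lam : ℝ) (hε : 0 ≤ ε) (hlam : 0 ≤ lam)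
    (x : ℝ → ℝ) (hx : ContinuousOn x (Set.Icc (0:ℝ) T))
    (h : ∀ t ∈ Set.Icc (0:ℝ) T,
      |x t| ≤ ε + (lam / Real.Gamma α) * ∫ τ in (0:ℝ)..t, |x τ| / (t - τ) ^ (1 - α))
    (M : ℝ) (hM : ∀ t ∈ Set.Icc (0:ℝ) T, |x t| ≤ M) :
    ∀ n : ℕ, ∀ t ∈ Set.Icc (0:ℝ) T,
      |x t| ≤ ε * ∑ k ∈ Finset.range n, (lam * t ^ α) ^ k / Real.Gamma (α * k + 1)
        + M * (lam * t ^ α) ^ n / Real.Gamma (α * n + 1) := by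
  obtain ⟨hα0, hα1⟩ := hα
  have hΓα : 0 < Real.Gamma α := Real.Gamma_pos_of_pos hα0
  intro n
  induction n with
  | zero => intro t ht; simpa [Real.Gamma_one] using hM t ht
  | succ n ih =>
    intro t ht
    obtain ⟨ht0, htT⟩ := ht
    have hsub : Set.Icc (0:ℝ) t ⊆ Set.Icc (0:ℝ) T := Set.Icc_subset_Icc le_rfl htT
    have huIcc : Set.uIcc (0:ℝ) t = Set.Icc 0 t := Set.uIcc_of_le ht0
    set G := Real.Gamma with hG
    set B : ℝ → ℝ := fun τ =>
      ε * ∑ k ∈ Finset.range n, lam ^ k * τ ^ (α * k) / G (α * k + 1)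
        + M * (lam ^ n * τ ^ (α * n)) / G (α * n + 1) with hBdef
    have hBc : Continuous B := by
      apply Continuous.add
      · exact continuous_const.mul (continuous_finset_sum _ fun k _ =>
          ((continuous_const.mul (cont_rpow_nat hα0 k)).div_const _))
      · exact (continuous_const.mul (continuous_const.mul (cont_rpow_nat hα0 n))).div_const _
    have hIH : ∀ τ ∈ Set.Icc (0:ℝ) t, |x τ| ≤ B τ := by
      intro τ hτ
      have h2 := ih τ (hsub hτ)
      simp only [pow_eq' hτ.1] at h2
      exact h2
    have hxc : ContinuousOn (fun τ => |x τ|) (Set.uIcc (0:ℝ) t) := by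
      rw [huIcc]; exact (hx.mono hsub).abs
    have hI1 : IntervalIntegrable (fun τ => (t - τ) ^ (α-1) * |x τ|) volume 0 t :=
      kernel_integrable ⟨hα0, hα1⟩ hxc
    have hI2 : IntervalIntegrable (fun τ => (t - τ) ^ (α-1) * B τ) volume 0 t :=
      kernel_integrable ⟨hα0, hα1⟩ hBc.continuousOn
    have hIk : ∀ k : ℕ, IntervalIntegrable (fun τ => (t - τ) ^ (α-1) * τ ^ (α * k)) volume 0 t :=
      fun k => kernel_integrable ⟨hα0, hα1⟩ (cont_rpow_nat hα0 k).continuousOn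
    have hIcong : (∫ τ in (0:ℝ)..t, |x τ| / (t - τ) ^ (1 - α))
        = ∫ τ in (0:ℝ)..t, (t - τ) ^ (α-1) * |x τ| := by
      apply intervalIntegral.integral_congr
      intro τ hτ
      rw [huIcc] at hτ
      have h1 : (0:ℝ) ≤ t - τ := by linarith [hτ.2]
      show |x τ| / (t - τ) ^ (1 - α) = (t - τ) ^ (α-1) * |x τ|
      rw [show (α - 1) = -(1-α) by ring, Real.rpow_neg h1]
      ring
    have hmono : (∫ τ in (0:ℝ)..t, (t - τ) ^ (α-1) * |x τ|)
        ≤ ∫ τ in (0:ℝ)..t, (t - τ) ^ (α-1) * B τ := by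
      apply intervalIntegral.integral_mono_on ht0 hI1 hI2
      intro τ hτ
      have hk : (0:ℝ) ≤ (t - τ) ^ (α-1) := Real.rpow_nonneg (by linarith [hτ.2]) _
      exact mul_le_mul_of_nonneg_left (hIH τ hτ) hk
    have hJ : (∫ τ in (0:ℝ)..t, (t - τ) ^ (α-1) * B τ)
        = (∑ k ∈ Finset.range n, (ε * lam ^ k / G (α * k + 1))
              * (G α * G (α * k + 1) / G (α * k + α + 1) * t ^ (α * k + α)))
          + (M * lam ^ n / G (α * n + 1))
              * (G α * G (α * n + 1) / G (α * n + α + 1) * t ^ (α * n + α)) := by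
      have expand : ∀ τ ∈ Set.uIcc (0:ℝ) t, (t - τ) ^ (α-1) * B τ
          = (∑ k ∈ Finset.range n,
              (ε * lam ^ k / G (α * k + 1)) * ((t - τ) ^ (α-1) * τ ^ (α * k)))
            + (M * lam ^ n / G (α * n + 1)) * ((t - τ) ^ (α-1) * τ ^ (α * n)) := by
        intro τ _
        simp only [hBdef, mul_add, Finset.mul_sum]
        congr 1
        · exact Finset.sum_congr rfl fun k _ => by ring
        · ring
      have hsumInt : IntervalIntegrable (fun τ => ∑ k ∈ Finset.range n,
          ε * lam ^ k / G (α * k + 1) * ((t - τ) ^ (α-1) * τ ^ (α * k))) volume 0 t := by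
        have h0 := IntervalIntegrable.sum (μ := volume) (a := 0) (b := t) (Finset.range n)
          (f := fun (k : ℕ) (τ : ℝ) => ε * lam ^ k / G (α * k + 1)
            * ((t - τ) ^ (α-1) * τ ^ (α * k))) (fun k _ => (hIk k).const_mul _)
        have e : (∑ k ∈ Finset.range n, fun (τ : ℝ) => ε * lam ^ k / G (α * k + 1)
              * ((t - τ) ^ (α-1) * τ ^ (α * k)))
            = fun τ => ∑ k ∈ Finset.range n, ε * lam ^ k / G (α * k + 1)
              * ((t - τ) ^ (α-1) * τ ^ (α * k)) := by
          ext τ; simp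
        rwa [e] at h0
      rw [intervalIntegral.integral_congr expand,
        intervalIntegral.integral_add hsumInt ((hIk n).const_mul _),
        intervalIntegral.integral_finset_sum fun k _ => (hIk k).const_mul _]
      simp only [intervalIntegral.integral_const_mul]
      congr 1
      · exact Finset.sum_congr rfl fun k _ => by
          rw [moment ⟨hα0, hα1⟩ k ht0]; simp only [hG]; ring_nf
      · rw [moment ⟨hα0, hα1⟩ n ht0]; simp only [hG]; ring_nf
    have hterm : ∀ k : ℕ, (lam / G α) * ((ε * lam ^ k / G (α * k + 1))
            * (G α * G (α * k + 1) / G (α * k + α + 1) * t ^ (α * k + α)))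
        = ε * ((lam * t ^ α) ^ (k+1) / G (α * k + α + 1)) := by
      intro k
      have h1 : G (α * k + 1) ≠ 0 := (Real.Gamma_pos_of_pos (by positivity)).ne'
      have h3 : G (α * k + α + 1) ≠ 0 := (Real.Gamma_pos_of_pos (by positivity)).ne'
      have h2 : (lam * t ^ α) ^ (k+1) = lam ^ (k+1) * t ^ (α * k + α) := by
        rw [pow_eq' ht0]; push_cast; ring_nf
      rw [h2]
      field_simp
      ring
    have htermM : (lam / G α) * ((M * lam ^ n / G (α * n + 1))
            * (G α * G (α * n + 1) / G (α * n + α + 1) * t ^ (α * n + α)))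
        = M * ((lam * t ^ α) ^ (n+1) / G (α * n + α + 1)) := by
      have h1 : G (α * n + 1) ≠ 0 := (Real.Gamma_pos_of_pos (by positivity)).ne'
      have h3 : G (α * n + α + 1) ≠ 0 := (Real.Gamma_pos_of_pos (by positivity)).ne'
      have h2 : (lam * t ^ α) ^ (n+1) = lam ^ (n+1) * t ^ (α * n + α) := by
        rw [pow_eq' ht0]; push_cast; ring_nf
      rw [h2]
      field_simp
      ring
    have hconv : ∀ k : ℕ, ε * ((lam * t ^ α) ^ (k+1) / G (α * ((k+1 : ℕ) : ℝ) + 1))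
        = ε * ((lam * t ^ α) ^ (k+1) / G (α * k + α + 1)) := fun k => by push_cast; ring_nf
    calc |x t| ≤ ε + (lam / G α) * ∫ τ in (0:ℝ)..t, |x τ| / (t - τ) ^ (1 - α) :=
          h t ⟨ht0, htT⟩
      _ = ε + (lam / G α) * ∫ τ in (0:ℝ)..t, (t - τ) ^ (α-1) * |x τ| := by rw [hIcong]
      _ ≤ ε + (lam / G α) * ∫ τ in (0:ℝ)..t, (t - τ) ^ (α-1) * B τ := by
          have hc : 0 ≤ lam / G α := div_nonneg hlam hΓα.le
          exact add_le_add_right (mul_le_mul_of_nonneg_left hmono hc) ε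
      _ = ε * ∑ k ∈ Finset.range (n+1), (lam * t ^ α) ^ k / G (α * k + 1)
            + M * (lam * t ^ α) ^ (n+1) / G (α * ((n+1 : ℕ) : ℝ) + 1) := by
          rw [hJ, mul_add, Finset.mul_sum]
          rw [Finset.sum_congr rfl fun k _ => hterm k, htermM]
          rw [Finset.sum_range_succ']
          simp only [pow_zero, Nat.cast_zero, mul_zero, zero_add, hG, Real.Gamma_one, div_one]
          rw [mul_add, mul_one, Finset.mul_sum]
          rw [Finset.sum_congr rfl fun k _ => hconv k]
          simp only [hG]
          have hgg : Real.Gamma (α * ((n:ℝ) + 1) + 1) = Real.Gamma (α * n + α + 1) := by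
            ring_nf
          push_cast
          rw [hgg]
          ring



/-- Fractional Bellman–Gronwall lemma. -/
theorem fractional_gronwall
    (T : ℝ) (hT : 0 < T) (α : ℝ) (hα : α ∈ Set.Ioo (0:ℝ) 1)
    (ε lam : ℝ) (hε : 0 ≤ ε) (hlam : 0 ≤ lam)
    (x : ℝ → ℝ) (hx : ContinuousOn x (Set.Icc (0:ℝ) T))
    (h : ∀ t ∈ Set.Icc (0:ℝ) T,
      |x t| ≤ ε + (lam / Real.Gamma α) * ∫ τ in (0:ℝ)..t, |x τ| / (t - τ) ^ (1 - α)) :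
    ∀ t ∈ Set.Icc (0:ℝ) T,
      |x t| ≤ ε * mittagLeffler α (lam * t ^ α) ∧
      ε * mittagLeffler α (lam * t ^ α) ≤ ε * mittagLeffler α (lam * T ^ α) := by
  obtain ⟨hα0, hα1⟩ := hα
  obtain ⟨t₀, ht₀, hMax⟩ := isCompact_Icc.exists_isMaxOn
    (Set.nonempty_Icc.mpr hT.le) hx.abs
  have key := gronwall_aux T ⟨hα0, hα1⟩ ε lam hε hlam x hx h (|x t₀|)
    (fun s hs => hMax hs)
  intro t ht
  have hz : 0 ≤ lam * t ^ α := mul_nonneg hlam (Real.rpow_nonneg ht.1 α)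
  have hzT : 0 ≤ lam * T ^ α := mul_nonneg hlam (Real.rpow_nonneg hT.le α)
  have hsum := ml_summable ⟨hα0, hα1⟩ hz
  have hsumT := ml_summable ⟨hα0, hα1⟩ hzT
  constructor
  · have h1 : Tendsto (fun n => ∑ k ∈ Finset.range n,
        (lam * t ^ α) ^ k / Real.Gamma (α * k + 1)) atTop
        (𝓝 (mittagLeffler α (lam * t ^ α))) := hsum.hasSum.tendsto_sum_nat
    have h2 : Tendsto (fun n : ℕ => (|x t₀|) * ((lam * t ^ α) ^ n / Real.Gamma (α * n + 1)))
        atTop (𝓝 ((|x t₀|) * 0)) := hsum.tendsto_atTop_zero.const_mul _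
    have h3 : Tendsto (fun n : ℕ => ε * ∑ k ∈ Finset.range n,
          (lam * t ^ α) ^ k / Real.Gamma (α * k + 1)
          + (|x t₀|) * (lam * t ^ α) ^ n / Real.Gamma (α * n + 1)) atTop
        (𝓝 (ε * mittagLeffler α (lam * t ^ α) + (|x t₀|) * 0)) := by
      have := (h1.const_mul ε).add h2
      simpa [mul_div_assoc] using this
    have := ge_of_tendsto' h3 (fun n => key n t ht)
    simpa using this
  · apply mul_le_mul_of_nonneg_left _ hε
    unfold mittagLeffler
    apply Summable.tsum_le_tsum _ hsum hsumT
    intro k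
    gcongr
    · exact ht.1
    · exact ht.2
end

section
/- Key inequality: if V : ℝ^n → ℝ is convex and differentiable with locally Lipschitz gradient, x : [0,t] → ℝ^n is Lipschitz, and φ(τ) = V(x(τ)) − V(x(t)) − ⟨∇V(x(t)), x(τ) − x(t)⟩, then 0 ≤ φ(τ) ≤ λ_V H² (t−τ)^{2α} for τ ∈ [0,t], where H is a Hölder-α constant of x on [0,t] and λ_V a Lipschitz constant of ∇V on a ball containing the range of x; consequently ∫₀^t φ'(τ)/(t−τ)^α dτ = −φ(0)/t^α − α ∫₀^t φ(τ)/(t−τ)^{α+1} dτ ≤ 0. -/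
open MeasureTheory Real Set Filter Topology
open scoped ENNReal NNReal

open scoped RealInnerProductSpace

/-- The auxiliary function φ(τ) = V(x(τ)) − V(x(t)) − ⟨∇V(x(t)), x(τ) − x(t)⟩. -/
noncomputable def phiAux {n : ℕ} (V : EuclideanSpace ℝ (Fin n) → ℝ)
    (x : ℝ → EuclideanSpace ℝ (Fin n)) (t τ : ℝ) : ℝ :=
  V (x τ) - V (x t) - ⟪gradient V (x t), x τ - x t⟫

section Helpers

theorem tendsto_seq_slope {F : ℝ → ℝ} {d : ℝ} {c : ℝ} (hF : HasDerivAt F d c)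
    {h : ℕ → ℝ} (hpos : ∀ n, 0 < h n) (hh0 : Tendsto h atTop (𝓝 0)) :
    Tendsto (fun n => (F (c + h n) - F c) / h n) atTop (𝓝 d) := by
  have hs := hasDerivAt_iff_tendsto_slope.1 hF
  have hseq : Tendsto (fun n => c + h n) atTop (𝓝[≠] c) := by
    rw [tendsto_nhdsWithin_iff]
    constructor
    · simpa using tendsto_const_nhds.add hh0
    · exact Eventually.of_forall fun n => by
        simp [ne_of_gt (hpos n)]
  have := hs.comp hseq
  refine this.congr fun n => ?_
  simp [slope_def_field, add_sub_cancel_left]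

theorem lipschitzFTC {f : ℝ → ℝ} {M : ℝ≥0} (hf : LipschitzWith M f) (a b : ℝ) :
    ∫ s in a..b, deriv f s = f b - f a := by
  have hcont : Continuous f := hf.continuous
  have hint : ∀ u v : ℝ, IntervalIntegrable f volume u v := fun u v =>
    hcont.intervalIntegrable u v
  set h : ℕ → ℝ := fun n => (n + 1 : ℝ)⁻¹ with hh
  have hpos : ∀ n, 0 < h n := fun n => by positivity
  have hh0 : Tendsto h atTop (𝓝 0) := by
    simpa [hh, one_div] using tendsto_one_div_add_atTop_nhds_zero_nat (𝕜 := ℝ)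
  set g : ℕ → ℝ → ℝ := fun n s => (f (s + h n) - f s) / h n with hg
  have key : ∀ n, ∫ s in a..b, g n s =
      ((∫ s in b..(b + h n), f s) - ∫ s in a..(a + h n), f s) / h n := by
    intro n
    have h1 : ∫ s in a..b, g n s = ((∫ s in a..b, f (s + h n)) - ∫ s in a..b, f s) / h n := by
      rw [hg]
      simp only [div_eq_mul_inv, sub_mul]
      rw [← intervalIntegral.integral_mul_const, ← intervalIntegral.integral_mul_const,
        intervalIntegral.integral_sub]
      · exact ((hcont.comp (continuous_id.add continuous_const)).mul
          continuous_const).intervalIntegrable _ _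
      · exact (hcont.mul continuous_const).intervalIntegrable _ _
    rw [h1, intervalIntegral.integral_comp_add_right]
    congr 1
    have c1 : (∫ s in (a + h n)..(b + h n), f s) =
        (∫ s in (a + h n)..b, f s) + ∫ s in b..(b + h n), f s :=
      (intervalIntegral.integral_add_adjacent_intervals (hint _ _) (hint _ _)).symm
    have c2 : (∫ s in a..b, f s) =
        (∫ s in a..(a + h n), f s) + ∫ s in (a + h n)..b, f s :=
      (intervalIntegral.integral_add_adjacent_intervals (hint _ _) (hint _ _)).symm
    rw [c1, c2]; ring
  have limF : ∀ c : ℝ, Tendsto (fun n => (∫ s in c..(c + h n), f s) / h n) atTop (𝓝 (f c)) := by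
    intro c
    have hF : HasDerivAt (fun u => ∫ s in c..u, f s) (f c) c :=
      intervalIntegral.integral_hasDerivAt_right (hint c c)
        (hcont.stronglyMeasurableAtFilter _ _) hcont.continuousAt
    have := tendsto_seq_slope hF hpos hh0
    simpa using this
  have limRHS : Tendsto (fun n => ((∫ s in b..(b + h n), f s) - ∫ s in a..(a + h n), f s) / h n)
      atTop (𝓝 (f b - f a)) := by
    simp only [sub_div]
    exact (limF b).sub (limF a)
  have limLHS : Tendsto (fun n => ∫ s in a..b, g n s) atTop (𝓝 (∫ s in a..b, deriv f s)) := by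
    apply intervalIntegral.tendsto_integral_filter_of_dominated_convergence (fun _ => (M : ℝ))
    · exact Eventually.of_forall fun n =>
        (((hcont.comp (continuous_id.add continuous_const)).sub
          hcont).div_const _).aestronglyMeasurable
    · refine Eventually.of_forall fun n => Eventually.of_forall fun s _ => ?_
      have := hf.dist_le_mul (s + h n) s
      rw [Real.dist_eq, Real.dist_eq] at this
      simp only [add_sub_cancel_left] at this
      rw [hg, Real.norm_eq_abs, abs_div, abs_of_pos (hpos n), div_le_iff₀ (hpos n)]
      simpa [abs_of_pos (hpos n)] using this
    · exact intervalIntegrable_const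
    · have hae : ∀ᵐ s : ℝ, DifferentiableAt ℝ f s := hf.ae_differentiableAt_of_real
      filter_upwards [hae] with s hs _
      exact tendsto_seq_slope hs.hasDerivAt hpos hh0
  rw [funext key] at limLHS
  exact tendsto_nhds_unique limLHS limRHS

theorem lipschitzOnFTC {f : ℝ → ℝ} {M : ℝ≥0} {a b : ℝ} (hab : a ≤ b)
    (hf : LipschitzOnWith M f (Set.Icc a b)) :
    ∫ s in a..b, deriv f s = f b - f a := by
  obtain ⟨F, hF, hFeq⟩ := hf.extend_real
  have heq : ∀ s ∈ Ioo a b, deriv f s = deriv F s := by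
    intro s hs
    apply Filter.EventuallyEq.deriv_eq
    filter_upwards [Ioo_mem_nhds hs.1 hs.2] with u hu
    exact hFeq (Ioo_subset_Icc_self hu)
  have hb : ∀ᵐ x : ℝ, x ≠ b := by
    refine ae_iff.2 ?_
    simpa using measure_singleton b
  have hcg : ∫ s in a..b, deriv f s = ∫ s in a..b, deriv F s := by
    apply intervalIntegral.integral_congr_ae
    filter_upwards [hb] with s hsb hs
    rw [Set.uIoc_of_le hab] at hs
    exact heq s ⟨hs.1, lt_of_le_of_ne hs.2 hsb⟩
  rw [hcg, lipschitzFTC hF a b, hFeq (Set.right_mem_Icc.2 hab), hFeq (Set.left_mem_Icc.2 hab)]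

theorem convex_grad_ineq {n : ℕ} (V : EuclideanSpace ℝ (Fin n) → ℝ)
    (hVconv : ConvexOn ℝ Set.univ V) (hVdiff : Differentiable ℝ V)
    (a b : EuclideanSpace ℝ (Fin n)) :
    ⟪gradient V a, b - a⟫ ≤ V b - V a := by
  set ψ : ℝ → ℝ := fun s => V (a + s • (b - a)) with hψ
  have hconv : ConvexOn ℝ Set.univ ψ := by
    have h1 := hVconv.comp_affineMap (AffineMap.lineMap a b)
    have h2 : (⇑(AffineMap.lineMap a b) ⁻¹' Set.univ) = (Set.univ : Set ℝ) := by simp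
    rw [h2] at h1
    rw [show ψ = V ∘ ⇑(AffineMap.lineMap a b) from ?_]
    · exact h1
    funext s
    simp [hψ, AffineMap.lineMap_apply, Function.comp]
    congr 1
    module
  have hline : ∀ s : ℝ, HasDerivAt (fun u : ℝ => a + u • (b - a)) (b - a) s := by
    intro s
    simpa using ((hasDerivAt_id s).smul_const (b - a)).const_add a
  have hd : HasDerivAt ψ ⟪gradient V a, b - a⟫ 0 := by
    have hg : HasGradientAt V (gradient V a) a := (hVdiff a).hasGradientAt
    have hfd := hasGradientAt_iff_hasFDerivAt.1 hg
    have hfd' : HasFDerivAt V ((InnerProductSpace.toDual ℝ (EuclideanSpace ℝ (Fin n)))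
        (gradient V a)) ((fun u : ℝ => a + u • (b - a)) 0) := by simpa using hfd
    have := hfd'.comp_hasDerivAt (0 : ℝ) (hline 0)
    simpa [InnerProductSpace.toDual_apply_apply, hψ, Function.comp_def] using this
  have := hconv.le_slope_of_hasDerivAt (Set.mem_univ (0:ℝ)) (Set.mem_univ (1:ℝ)) one_pos hd
  simpa [slope_def_field, hψ] using this

theorem lipOn_mul {f w : ℝ → ℝ} {s : Set ℝ} {Kf Kw : ℝ≥0} {Bf Bw : ℝ}
    (hf : LipschitzOnWith Kf f s) (hw : LipschitzOnWith Kw w s)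
    (hBf : ∀ x ∈ s, |f x| ≤ Bf) (hBw : ∀ x ∈ s, |w x| ≤ Bw) :
    LipschitzOnWith (Real.toNNReal (Bf * Kw + Bw * Kf)) (fun x => f x * w x) s := by
  apply LipschitzOnWith.of_dist_le_mul
  intro x hx y hy
  have hd1 := hf.dist_le_mul x hx y hy
  have hd2 := hw.dist_le_mul x hx y hy
  simp only [Real.dist_eq] at hd1 hd2 ⊢
  have key : |f x * w x - f y * w y| ≤ (Bf * Kw + Bw * Kf) * |x - y| := by
    have decomp : f x * w x - f y * w y = f x * (w x - w y) + w y * (f x - f y) := by ring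
    rw [decomp]
    calc |f x * (w x - w y) + w y * (f x - f y)|
        ≤ |f x * (w x - w y)| + |w y * (f x - f y)| := abs_add_le _ _
      _ = |f x| * |w x - w y| + |w y| * |f x - f y| := by rw [abs_mul, abs_mul]
      _ ≤ Bf * (Kw * |x - y|) + Bw * (Kf * |x - y|) := by
          refine add_le_add (mul_le_mul (hBf x hx) hd2 (abs_nonneg _)
            ((abs_nonneg _).trans (hBf x hx)))
            (mul_le_mul (hBw y hy) hd1 (abs_nonneg _) ((abs_nonneg _).trans (hBw y hy)))
      _ = (Bf * Kw + Bw * Kf) * |x - y| := by ring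
  exact key.trans (mul_le_mul_of_nonneg_right (Real.le_coe_toNNReal _) (abs_nonneg _))

end Helpers

/-- key inequality 0 ≤ φ(τ) ≤ λ_V H² (t−τ)^{2α} on [0,t] and the
resulting integral identity and sign estimate. -/
theorem convexity_key_inequality
    (t : ℝ) (ht : 0 < t) (n : ℕ) (α : ℝ) (hα : α ∈ Set.Ioo (0:ℝ) 1)
    (x : ℝ → EuclideanSpace ℝ (Fin n)) (K : ℝ≥0)
    (hLip : LipschitzOnWith K x (Set.Icc (0:ℝ) t))
    (H : ℝ) (hH : 0 ≤ H)
    (hHol : ∀ τ ∈ Set.Icc (0:ℝ) t, ∀ σ ∈ Set.Icc (0:ℝ) t,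
      ‖x τ - x σ‖ ≤ H * |τ - σ| ^ α)
    (V : EuclideanSpace ℝ (Fin n) → ℝ)
    (hVconv : ConvexOn ℝ Set.univ V) (hVdiff : Differentiable ℝ V)
    (r : ℝ) (hrange : ∀ τ ∈ Set.Icc (0:ℝ) t, ‖x τ‖ ≤ r)
    (lamV : ℝ) (hlamV0 : 0 ≤ lamV)
    (hlamV : ∀ a b : EuclideanSpace ℝ (Fin n), ‖a‖ ≤ r → ‖b‖ ≤ r →
      ‖gradient V a - gradient V b‖ ≤ lamV * ‖a - b‖) :
    (∀ τ ∈ Set.Icc (0:ℝ) t,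
      0 ≤ phiAux V x t τ ∧ phiAux V x t τ ≤ lamV * H ^ 2 * (t - τ) ^ (2 * α)) ∧
    (∫ τ in (0:ℝ)..t, deriv (phiAux V x t) τ / (t - τ) ^ α)
      = -(phiAux V x t 0) / t ^ α - α * ∫ τ in (0:ℝ)..t, phiAux V x t τ / (t - τ) ^ (α + 1) ∧
    (∫ τ in (0:ℝ)..t, deriv (phiAux V x t) τ / (t - τ) ^ α) ≤ 0 := by
  obtain ⟨hα0, hα1⟩ := hα
  have hmem0 : (0:ℝ) ∈ Set.Icc (0:ℝ) t := ⟨le_refl 0, ht.le⟩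
  have hmemt : t ∈ Set.Icc (0:ℝ) t := ⟨ht.le, le_refl t⟩
  set g0 : EuclideanSpace ℝ (Fin n) := gradient V (x t) with hg0
  set φ : ℝ → ℝ := phiAux V x t with hφ
  -- PART 1 : pointwise bounds
  have part1 : ∀ τ ∈ Set.Icc (0:ℝ) t,
      0 ≤ φ τ ∧ φ τ ≤ lamV * H ^ 2 * (t - τ) ^ (2 * α) := by
    intro τ hτ
    have httτ : (0:ℝ) ≤ t - τ := by linarith [hτ.2]
    have low := convex_grad_ineq V hVconv hVdiff (x t) (x τ)
    have upA := convex_grad_ineq V hVconv hVdiff (x τ) (x t)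
    refine ⟨by simp only [hφ, phiAux]; linarith, ?_⟩
    have hupper : V (x τ) - V (x t) ≤ ⟪gradient V (x τ), x τ - x t⟫ := by
      rw [← neg_sub (x τ) (x t), inner_neg_right] at upA
      linarith
    have h1 : φ τ ≤ ⟪gradient V (x τ) - g0, x τ - x t⟫ := by
      rw [inner_sub_left]
      simp only [hφ, phiAux]
      linarith
    have h2 : ⟪gradient V (x τ) - g0, x τ - x t⟫ ≤ ‖gradient V (x τ) - g0‖ * ‖x τ - x t‖ :=
      real_inner_le_norm _ _
    have h3 : ‖gradient V (x τ) - g0‖ ≤ lamV * ‖x τ - x t‖ :=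
      hlamV _ _ (hrange τ hτ) (hrange t hmemt)
    have h4 : ‖x τ - x t‖ ≤ H * (t - τ) ^ α := by
      have := hHol τ hτ t hmemt
      rwa [abs_of_nonpos (by linarith [hτ.2]), neg_sub] at this
    have h5 : ‖x τ - x t‖ * ‖x τ - x t‖ ≤ (H * (t - τ) ^ α) * (H * (t - τ) ^ α) :=
      mul_le_mul h4 h4 (norm_nonneg _) (by positivity)
    have hpow : (t - τ) ^ (2 * α) = (t - τ) ^ α * (t - τ) ^ α := by
      rw [show 2 * α = α + α by ring, Real.rpow_add' httτ (by positivity)]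
    calc φ τ ≤ ‖gradient V (x τ) - g0‖ * ‖x τ - x t‖ := h1.trans h2
      _ ≤ (lamV * ‖x τ - x t‖) * ‖x τ - x t‖ :=
          mul_le_mul_of_nonneg_right h3 (norm_nonneg _)
      _ = lamV * (‖x τ - x t‖ * ‖x τ - x t‖) := by ring
      _ ≤ lamV * ((H * (t - τ) ^ α) * (H * (t - τ) ^ α)) :=
          mul_le_mul_of_nonneg_left h5 hlamV0
      _ = lamV * H ^ 2 * (t - τ) ^ (2 * α) := by rw [hpow]; ring
  -- PART 2 : Lipschitz continuity of φ on [0,t]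
  have hr0 : 0 ≤ r := (norm_nonneg _).trans (hrange 0 hmem0)
  have hfderiv_norm : ∀ z : EuclideanSpace ℝ (Fin n), ‖fderiv ℝ V z‖ = ‖gradient V z‖ := by
    intro z
    have h := hasGradientAt_iff_hasFDerivAt.1 (hVdiff z).hasGradientAt
    rw [h.fderiv]
    exact (InnerProductSpace.toDual ℝ (EuclideanSpace ℝ (Fin n))).norm_map _
  set Gb : ℝ := ‖g0‖ + lamV * (2 * r) with hGbdef
  have hGb0 : 0 ≤ Gb := by positivity
  have hgradbd : ∀ z : EuclideanSpace ℝ (Fin n), ‖z‖ ≤ r → ‖gradient V z‖ ≤ Gb := by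
    intro z hz
    have h1 : ‖gradient V z - g0‖ ≤ lamV * ‖z - x t‖ := hlamV z (x t) hz (hrange t hmemt)
    have h2 : ‖z - x t‖ ≤ 2 * r := by
      calc ‖z - x t‖ ≤ ‖z‖ + ‖x t‖ := norm_sub_le _ _
        _ ≤ 2 * r := by have := hrange t hmemt; linarith
    have h3 := mul_le_mul_of_nonneg_left h2 hlamV0
    calc ‖gradient V z‖ = ‖gradient V z - g0 + g0‖ := by rw [sub_add_cancel]
      _ ≤ ‖gradient V z - g0‖ + ‖g0‖ := norm_add_le _ _
      _ ≤ Gb := by rw [hGbdef]; linarith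
  have hVlip : ∀ a b : EuclideanSpace ℝ (Fin n), ‖a‖ ≤ r → ‖b‖ ≤ r →
      ‖V a - V b‖ ≤ Gb * ‖a - b‖ := by
    intro a b ha hb
    exact (convex_closedBall (0 : EuclideanSpace ℝ (Fin n)) r).norm_image_sub_le_of_norm_fderiv_le
      (fun z _ => hVdiff z)
      (fun z hz => by rw [hfderiv_norm]; exact hgradbd z (mem_closedBall_zero_iff.1 hz))
      (mem_closedBall_zero_iff.2 hb) (mem_closedBall_zero_iff.2 ha)
  set M0 : ℝ := Gb + ‖g0‖ with hM0def
  have hM00 : 0 ≤ M0 := by positivity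
  set Mp : ℝ≥0 := M0.toNNReal * K with hMpdef
  have hMpcoe : (Mp : ℝ) = M0 * K := by
    rw [hMpdef, NNReal.coe_mul, Real.coe_toNNReal _ hM00]
  have hφlip : LipschitzOnWith Mp φ (Set.Icc 0 t) := by
    apply LipschitzOnWith.of_dist_le_mul
    intro τ hτ σ hσ
    have hxd : dist (x τ) (x σ) ≤ K * dist τ σ := hLip.dist_le_mul τ hτ σ hσ
    rw [dist_eq_norm] at hxd
    have hin : ⟪g0, x τ - x t⟫ - ⟪g0, x σ - x t⟫ = ⟪g0, x τ - x σ⟫ := by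
      rw [← inner_sub_right]
      congr 1
      abel
    have hdiffeq : φ τ - φ σ = (V (x τ) - V (x σ)) - ⟪g0, x τ - x σ⟫ := by
      simp only [hφ, phiAux]
      rw [← hin]; ring
    rw [Real.dist_eq, hdiffeq]
    calc |(V (x τ) - V (x σ)) - ⟪g0, x τ - x σ⟫|
        ≤ |V (x τ) - V (x σ)| + |⟪g0, x τ - x σ⟫| := abs_sub _ _
      _ ≤ Gb * ‖x τ - x σ‖ + ‖g0‖ * ‖x τ - x σ‖ := by
          refine add_le_add ?_ (abs_real_inner_le_norm _ _)
          have := hVlip (x τ) (x σ) (hrange τ hτ) (hrange σ hσ)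
          rwa [Real.norm_eq_abs] at this
      _ = M0 * ‖x τ - x σ‖ := by rw [hM0def]; ring
      _ ≤ M0 * (K * dist τ σ) := mul_le_mul_of_nonneg_left hxd hM00
      _ = Mp * dist τ σ := by rw [hMpcoe]; ring
  -- extension and a.e. differentiability
  obtain ⟨Φ, hΦlip, hΦeq⟩ := hφlip.extend_real
  have hae : ∀ᵐ τ : ℝ, DifferentiableAt ℝ Φ τ := hΦlip.ae_differentiableAt_of_real
  have hloc : ∀ τ ∈ Set.Ioo (0:ℝ) t, φ =ᶠ[𝓝 τ] Φ := by
    intro τ hτ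
    filter_upwards [Ioo_mem_nhds hτ.1 hτ.2] with u hu
    exact hΦeq (Ioo_subset_Icc_self hu)
  have hdcongr : ∀ τ ∈ Set.Ioo (0:ℝ) t, deriv φ τ = deriv Φ τ :=
    fun τ hτ => (hloc τ hτ).deriv_eq
  have hΦbd : ∀ τ, |deriv Φ τ| ≤ (Mp : ℝ) := by
    intro τ
    by_cases hd : DifferentiableAt ℝ Φ τ
    · have h1 : ‖fderiv ℝ Φ τ‖ ≤ (Mp : ℝ) := norm_fderiv_le_of_lipschitz ℝ hΦlip
      calc |deriv Φ τ| = ‖fderiv ℝ Φ τ 1‖ := by rw [fderiv_apply_one_eq_deriv]; rfl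
        _ ≤ ‖fderiv ℝ Φ τ‖ * ‖(1:ℝ)‖ := (fderiv ℝ Φ τ).le_opNorm 1
        _ ≤ (Mp : ℝ) := by simpa using h1
    · simp [deriv_zero_of_not_differentiableAt hd]
  have hφdbd : ∀ τ ∈ Set.Ioo (0:ℝ) t, |deriv φ τ| ≤ (Mp : ℝ) := by
    intro τ hτ
    rw [hdcongr τ hτ]
    exact hΦbd τ
  -- measurability and integrability of the two integrands
  have hφcont : ContinuousOn φ (Set.Icc 0 t) := hφlip.continuousOn
  have hw1cont : ContinuousOn (fun τ : ℝ => (t - τ) ^ (-α)) (Set.Ioo 0 t) := by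
    intro τ hτ
    exact ((Real.continuousAt_rpow_const _ _
      (Or.inl (ne_of_gt (sub_pos.2 hτ.2)))).comp
      ((continuous_const.sub continuous_id).continuousAt)).continuousWithinAt
  have hw2cont : ContinuousOn (fun τ : ℝ => (t - τ) ^ (-α - 1)) (Set.Ioo 0 t) := by
    intro τ hτ
    exact ((Real.continuousAt_rpow_const _ _
      (Or.inl (ne_of_gt (sub_pos.2 hτ.2)))).comp
      ((continuous_const.sub continuous_id).continuousAt)).continuousWithinAt
  have hw1_ii : IntervalIntegrable (fun τ : ℝ => (t - τ) ^ (-α)) volume 0 t := by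
    have h0 := intervalIntegral.intervalIntegrable_rpow' (a := 0) (b := t) (r := -α)
      (by linarith)
    have := (h0.comp_sub_left t).symm
    simpa using this
  have hw3_ii : IntervalIntegrable (fun τ : ℝ => (t - τ) ^ (α - 1)) volume 0 t := by
    have h0 := intervalIntegral.intervalIntegrable_rpow' (a := 0) (b := t) (r := α - 1)
      (by linarith)
    have := (h0.comp_sub_left t).symm
    simpa using this
  have hI1 : IntervalIntegrable (fun τ => deriv φ τ * (t - τ) ^ (-α)) volume 0 t := by
    rw [intervalIntegrable_iff_integrableOn_Ioc_of_le ht.le]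
    have hIoo : IntegrableOn (fun τ => deriv φ τ * (t - τ) ^ (-α)) (Set.Ioo 0 t) volume := by
      apply Integrable.mono' (g := fun τ => (Mp : ℝ) * (t - τ) ^ (-α))
      · exact (((intervalIntegrable_iff_integrableOn_Ioc_of_le ht.le).1
          (hw1_ii.const_mul (Mp : ℝ))).mono_set Ioo_subset_Ioc_self)
      · refine AEStronglyMeasurable.mul ?_ (hw1cont.aestronglyMeasurable measurableSet_Ioo)
        exact (measurable_deriv φ).aestronglyMeasurable.restrict
      · filter_upwards [ae_restrict_mem measurableSet_Ioo] with τ hτ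
        rw [Real.norm_eq_abs, abs_mul,
          abs_of_nonneg (Real.rpow_nonneg (by linarith [hτ.2] : (0:ℝ) ≤ t - τ) _)]
        exact mul_le_mul_of_nonneg_right (hφdbd τ hτ)
          (Real.rpow_nonneg (by linarith [hτ.2]) _)
    exact hIoo.congr_set_ae Ioo_ae_eq_Ioc.symm
  have hI2 : IntervalIntegrable (fun τ => φ τ * (t - τ) ^ (-α - 1)) volume 0 t := by
    rw [intervalIntegrable_iff_integrableOn_Ioc_of_le ht.le]
    have hIoo : IntegrableOn (fun τ => φ τ * (t - τ) ^ (-α - 1)) (Set.Ioo 0 t) volume := by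
      apply Integrable.mono' (g := fun τ => lamV * H ^ 2 * (t - τ) ^ (α - 1))
      · exact (((intervalIntegrable_iff_integrableOn_Ioc_of_le ht.le).1
          (hw3_ii.const_mul (lamV * H ^ 2))).mono_set Ioo_subset_Ioc_self)
      · exact AEStronglyMeasurable.mul
          ((hφcont.mono Ioo_subset_Icc_self).aestronglyMeasurable measurableSet_Ioo)
          (hw2cont.aestronglyMeasurable measurableSet_Ioo)
      · filter_upwards [ae_restrict_mem measurableSet_Ioo] with τ hτ
        have htpos : (0:ℝ) < t - τ := sub_pos.2 hτ.2
        have hφτ := part1 τ (Ioo_subset_Icc_self hτ)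
        rw [Real.norm_eq_abs, abs_mul, abs_of_nonneg hφτ.1,
          abs_of_nonneg (Real.rpow_nonneg htpos.le _)]
        have hcomb : (t - τ) ^ (2 * α) * (t - τ) ^ (-α - 1) = (t - τ) ^ (α - 1) := by
          rw [← Real.rpow_add htpos]
          congr 1
          ring
        calc φ τ * (t - τ) ^ (-α - 1)
            ≤ lamV * H ^ 2 * (t - τ) ^ (2 * α) * (t - τ) ^ (-α - 1) :=
              mul_le_mul_of_nonneg_right hφτ.2 (Real.rpow_nonneg htpos.le _)
          _ = lamV * H ^ 2 * (t - τ) ^ (α - 1) := by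
              rw [mul_assoc, hcomb]
    exact hIoo.congr_set_ae Ioo_ae_eq_Ioc.symm
  -- derivative of the weight
  have hw1d : ∀ τ : ℝ, τ < t →
      HasDerivAt (fun σ : ℝ => (t - σ) ^ (-α)) (α * (t - τ) ^ (-α - 1)) τ := by
    intro τ hτ
    have h1 : HasDerivAt (fun σ : ℝ => t - σ) (-1) τ := (hasDerivAt_id τ).const_sub t
    have h2 : HasDerivAt (fun y : ℝ => y ^ (-α)) (-α * (t - τ) ^ (-α - 1)) (t - τ) :=
      Real.hasDerivAt_rpow_const (Or.inl (ne_of_gt (sub_pos.2 hτ)))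
    have := h2.comp τ h1
    rw [show α * (t - τ) ^ (-α - 1) = -α * (t - τ) ^ (-α - 1) * -1 by ring]
    exact this
  -- the key identity on [0,u] for u < t
  have key_u : ∀ u ∈ Set.Ico (0:ℝ) t,
      (∫ τ in (0:ℝ)..u, deriv φ τ * (t - τ) ^ (-α))
        + α * ∫ τ in (0:ℝ)..u, φ τ * (t - τ) ^ (-α - 1)
      = φ u * (t - u) ^ (-α) - φ 0 * t ^ (-α) := by
    intro u hu
    obtain ⟨hu0, hut⟩ := hu
    have hsub : Set.Icc (0:ℝ) u ⊆ Set.Icc 0 t := Set.Icc_subset_Icc_right hut.le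
    have htu : (0:ℝ) < t - u := sub_pos.2 hut
    have hw1lip : LipschitzOnWith ((α * (t - u) ^ (-α - 1)).toNNReal)
        (fun σ : ℝ => (t - σ) ^ (-α)) (Set.Icc 0 u) := by
      apply (convex_Icc (0:ℝ) u).lipschitzOnWith_of_nnnorm_hasDerivWithin_le
        (f' := fun τ => α * (t - τ) ^ (-α - 1))
        (fun τ hτ => (hw1d τ (lt_of_le_of_lt hτ.2 hut)).hasDerivWithinAt)
      intro τ hτ
      have hτt : (0:ℝ) < t - τ := sub_pos.2 (lt_of_le_of_lt hτ.2 hut)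
      rw [← NNReal.coe_le_coe, coe_nnnorm, Real.norm_eq_abs,
        Real.coe_toNNReal _ (by positivity)]
      rw [abs_of_nonneg (by positivity)]
      exact mul_le_mul_of_nonneg_left
        (Real.rpow_le_rpow_of_nonpos htu (by linarith [hτ.2]) (by linarith)) hα0.le
    have hφbd' : ∀ σ ∈ Set.Icc (0:ℝ) u, |φ σ| ≤ lamV * H ^ 2 * t ^ (2 * α) := by
      intro σ hσ
      have h := part1 σ (hsub hσ)
      rw [abs_of_nonneg h.1]
      refine h.2.trans ?_
      have hσt : σ ≤ t := le_trans hσ.2 hut.le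
      have : (t - σ) ^ (2 * α) ≤ t ^ (2 * α) :=
        Real.rpow_le_rpow (by linarith) (by linarith [hσ.1]) (by positivity)
      exact mul_le_mul_of_nonneg_left this (by positivity)
    have hw1bd : ∀ σ ∈ Set.Icc (0:ℝ) u, |(t - σ) ^ (-α)| ≤ (t - u) ^ (-α) := by
      intro σ hσ
      rw [abs_of_nonneg (Real.rpow_nonneg (by linarith [hσ.2, hut.le] : (0:ℝ) ≤ t - σ) _)]
      exact Real.rpow_le_rpow_of_nonpos htu (by linarith [hσ.2]) (by linarith)
    have hPlip := lipOn_mul (hφlip.mono hsub) hw1lip hφbd' hw1bd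
    have hftc := lipschitzOnFTC hu0 hPlip
    have hanu : ∀ᵐ τ : ℝ, τ ≠ u := by
      refine ae_iff.2 ?_
      simpa using measure_singleton u
    have hcongr : ∫ σ in (0:ℝ)..u, deriv (fun σ => φ σ * (t - σ) ^ (-α)) σ
        = ∫ σ in (0:ℝ)..u,
            (deriv φ σ * (t - σ) ^ (-α) + α * (φ σ * (t - σ) ^ (-α - 1))) := by
      apply intervalIntegral.integral_congr_ae
      filter_upwards [hae, hanu] with σ hΦd hσu hσmem
      rw [Set.uIoc_of_le hu0] at hσmem
      have hσ : σ ∈ Set.Ioo (0:ℝ) t :=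
        ⟨hσmem.1, lt_of_lt_of_le (lt_of_le_of_ne hσmem.2 hσu) hut.le⟩
      have hφd : DifferentiableAt ℝ φ σ := ((hloc σ hσ).differentiableAt_iff).2 hΦd
      have hd1 : HasDerivAt φ (deriv φ σ) σ := hφd.hasDerivAt
      have hd2 := hw1d σ hσ.2
      rw [show (fun σ => φ σ * (t - σ) ^ (-α)) = φ * fun σ => (t - σ) ^ (-α) from rfl,
        (hd1.mul hd2).deriv]
      ring
    have hsplit : ∫ σ in (0:ℝ)..u,
          (deriv φ σ * (t - σ) ^ (-α) + α * (φ σ * (t - σ) ^ (-α - 1)))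
        = (∫ τ in (0:ℝ)..u, deriv φ τ * (t - τ) ^ (-α))
          + α * ∫ τ in (0:ℝ)..u, φ τ * (t - τ) ^ (-α - 1) := by
      have hss : Set.uIcc (0:ℝ) u ⊆ Set.uIcc (0:ℝ) t := by
        rw [Set.uIcc_of_le hu0, Set.uIcc_of_le ht.le]
        exact Set.Icc_subset_Icc_right hut.le
      rw [intervalIntegral.integral_add (hI1.mono_set hss)
        ((hI2.mono_set hss).const_mul α), intervalIntegral.integral_const_mul]
    rw [hcongr, hsplit] at hftc
    rw [hftc]
    simp [sub_zero]
  -- limits as u → t⁻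
  haveI : (𝓝[Set.Ioo (0:ℝ) t] t).NeBot := right_nhdsWithin_Ioo_neBot ht
  have hIccInt1 : IntegrableOn (fun τ => deriv φ τ * (t - τ) ^ (-α))
      (Set.uIcc (0:ℝ) t) volume := by
    rw [Set.uIcc_of_le ht.le, integrableOn_Icc_iff_integrableOn_Ioc]
    exact (intervalIntegrable_iff_integrableOn_Ioc_of_le ht.le).1 hI1
  have hIccInt2 : IntegrableOn (fun τ => φ τ * (t - τ) ^ (-α - 1))
      (Set.uIcc (0:ℝ) t) volume := by
    rw [Set.uIcc_of_le ht.le, integrableOn_Icc_iff_integrableOn_Ioc]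
    exact (intervalIntegrable_iff_integrableOn_Ioc_of_le ht.le).1 hI2
  have hL1 : Tendsto (fun u => ∫ τ in (0:ℝ)..u, deriv φ τ * (t - τ) ^ (-α))
      (𝓝[Set.Ioo (0:ℝ) t] t)
      (𝓝 (∫ τ in (0:ℝ)..t, deriv φ τ * (t - τ) ^ (-α))) := by
    have hcont := intervalIntegral.continuousOn_primitive_interval hIccInt1
    have := hcont t (by rw [Set.uIcc_of_le ht.le]; exact hmemt)
    exact this.mono_left (nhdsWithin_mono t
      (by rw [Set.uIcc_of_le ht.le]; exact Set.Ioo_subset_Icc_self))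
  have hL2 : Tendsto (fun u => ∫ τ in (0:ℝ)..u, φ τ * (t - τ) ^ (-α - 1))
      (𝓝[Set.Ioo (0:ℝ) t] t)
      (𝓝 (∫ τ in (0:ℝ)..t, φ τ * (t - τ) ^ (-α - 1))) := by
    have hcont := intervalIntegral.continuousOn_primitive_interval hIccInt2
    have := hcont t (by rw [Set.uIcc_of_le ht.le]; exact hmemt)
    exact this.mono_left (nhdsWithin_mono t
      (by rw [Set.uIcc_of_le ht.le]; exact Set.Ioo_subset_Icc_self))
  have hL3 : Tendsto (fun u => φ u * (t - u) ^ (-α)) (𝓝[Set.Ioo (0:ℝ) t] t) (𝓝 0) := by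
    have hbnd : Tendsto (fun u : ℝ => lamV * H ^ 2 * (t - u) ^ α)
        (𝓝[Set.Ioo (0:ℝ) t] t) (𝓝 0) := by
      have hb : Tendsto (fun u : ℝ => t - u) (𝓝[Set.Ioo (0:ℝ) t] t) (𝓝 0) := by
        have h : Tendsto (fun u : ℝ => t - u) (𝓝 t) (𝓝 (t - t)) :=
          (continuous_const.sub continuous_id).tendsto t
        rw [sub_self] at h
        exact h.mono_left nhdsWithin_le_nhds
      have hc : ContinuousAt (fun y : ℝ => y ^ α) 0 :=
        Real.continuousAt_rpow_const 0 α (Or.inr hα0.le)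
      have h2 := hc.tendsto.comp hb
      rw [Real.zero_rpow (ne_of_gt hα0)] at h2
      have h3 := h2.const_mul (lamV * H ^ 2)
      simpa using h3
    apply squeeze_zero' ?_ ?_ hbnd
    · filter_upwards [eventually_mem_nhdsWithin] with u hu
      exact mul_nonneg (part1 u (Set.Ioo_subset_Icc_self hu)).1
        (Real.rpow_nonneg (by linarith [hu.2]) _)
    · filter_upwards [eventually_mem_nhdsWithin] with u hu
      have htu : (0:ℝ) < t - u := sub_pos.2 hu.2
      have hcomb : (t - u) ^ (2 * α) * (t - u) ^ (-α) = (t - u) ^ α := by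
        rw [← Real.rpow_add htu]
        congr 1
        ring
      calc φ u * (t - u) ^ (-α)
          ≤ lamV * H ^ 2 * (t - u) ^ (2 * α) * (t - u) ^ (-α) :=
            mul_le_mul_of_nonneg_right (part1 u (Set.Ioo_subset_Icc_self hu)).2
              (Real.rpow_nonneg htu.le _)
        _ = lamV * H ^ 2 * (t - u) ^ α := by rw [mul_assoc, hcomb]
  have keyT : (∫ τ in (0:ℝ)..t, deriv φ τ * (t - τ) ^ (-α))
      + α * (∫ τ in (0:ℝ)..t, φ τ * (t - τ) ^ (-α - 1)) = 0 - φ 0 * t ^ (-α) := by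
    have h1 : Tendsto (fun u => (∫ τ in (0:ℝ)..u, deriv φ τ * (t - τ) ^ (-α))
        + α * ∫ τ in (0:ℝ)..u, φ τ * (t - τ) ^ (-α - 1)) (𝓝[Set.Ioo (0:ℝ) t] t)
        (𝓝 ((∫ τ in (0:ℝ)..t, deriv φ τ * (t - τ) ^ (-α))
          + α * ∫ τ in (0:ℝ)..t, φ τ * (t - τ) ^ (-α - 1))) :=
      hL1.add (hL2.const_mul α)
    have h2 : Tendsto (fun u => (∫ τ in (0:ℝ)..u, deriv φ τ * (t - τ) ^ (-α))
        + α * ∫ τ in (0:ℝ)..u, φ τ * (t - τ) ^ (-α - 1)) (𝓝[Set.Ioo (0:ℝ) t] t)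
        (𝓝 (0 - φ 0 * t ^ (-α))) := by
      apply Tendsto.congr' ?_ (hL3.sub tendsto_const_nhds)
      filter_upwards [eventually_mem_nhdsWithin] with u hu
      exact (key_u u ⟨hu.1.le, hu.2⟩).symm
    exact tendsto_nhds_unique h1 h2
  -- convert to the form in the statement
  have e1 : (∫ τ in (0:ℝ)..t, deriv φ τ / (t - τ) ^ α)
      = ∫ τ in (0:ℝ)..t, deriv φ τ * (t - τ) ^ (-α) := by
    apply intervalIntegral.integral_congr
    intro τ hτ
    rw [Set.uIcc_of_le ht.le] at hτ
    show deriv φ τ / (t - τ) ^ α = deriv φ τ * (t - τ) ^ (-α)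
    rw [Real.rpow_neg (by linarith [hτ.2] : (0:ℝ) ≤ t - τ), div_eq_mul_inv]
  have e2 : (∫ τ in (0:ℝ)..t, φ τ / (t - τ) ^ (α + 1))
      = ∫ τ in (0:ℝ)..t, φ τ * (t - τ) ^ (-α - 1) := by
    apply intervalIntegral.integral_congr
    intro τ hτ
    rw [Set.uIcc_of_le ht.le] at hτ
    show φ τ / (t - τ) ^ (α + 1) = φ τ * (t - τ) ^ (-α - 1)
    rw [show (-α - 1 : ℝ) = -(α + 1) by ring,
      Real.rpow_neg (by linarith [hτ.2] : (0:ℝ) ≤ t - τ), div_eq_mul_inv]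
  have e3 : -(φ 0) / t ^ α = -(φ 0 * t ^ (-α)) := by
    rw [Real.rpow_neg ht.le]
    ring
  have goal2 : (∫ τ in (0:ℝ)..t, deriv φ τ / (t - τ) ^ α)
      = -(φ 0) / t ^ α - α * ∫ τ in (0:ℝ)..t, φ τ / (t - τ) ^ (α + 1) := by
    rw [e1, e2, e3]
    linarith [keyT]
  refine ⟨part1, goal2, ?_⟩
  rw [goal2]
  have i1 : 0 ≤ φ 0 := (part1 0 hmem0).1
  have i2 : 0 ≤ ∫ τ in (0:ℝ)..t, φ τ / (t - τ) ^ (α + 1) := by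
    apply intervalIntegral.integral_nonneg ht.le
    intro τ hτ
    exact div_nonneg (part1 τ hτ).1 (Real.rpow_nonneg (by linarith [hτ.2]) _)
  have i3 : (0:ℝ) < t ^ α := Real.rpow_pos_of_pos ht α
  have i4 : 0 ≤ α * ∫ τ in (0:ℝ)..t, φ τ / (t - τ) ^ (α + 1) := mul_nonneg hα0.le i2
  have i5 : 0 ≤ φ 0 / t ^ α := div_nonneg i1 i3.le
  rw [neg_div]
  linarith
end
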